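/- arXiv:1403.4157 — 3 statements merged into one kernel-verified Lean document; each statement's English description precedes it below -/
import Mathlib

section
/- Let H be a block matrix of size Σ × ℓΣ over a field, partitioned into row blocks so that the first row block H₁ has n₁−1 rows and the second row block H₂ has m = Σ−(n₁−1) rows, and partitioned columnwise into ℓ copies of Σ columns each, where in each such column group the columns split as (n₁−1) columns and m columns. Suppose that in every column group, the (n₁−1)×(n₁−1) diagonal sub-block of H₁ is zero and the m×m diagonal sub-block of H₂ is zero. If n₁−1 > ℓ·m, then rank(H) ≤ (ℓ+1)·m. -/
/-- Lemma 2.4 (hessianconditions), abstracted: a `Σ × ℓΣ` block matrix (with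
`Σ = (n₁-1) + m`) whose diagonal blocks in each of the `ℓ` column groups vanish
has rank at most `(ℓ+1)·m` provided `n₁ - 1 > ℓ·m`. -/
theorem stmt0 {F : Type*} [Field F] (n₁ m ℓ : ℕ) (hℓ : 1 ≤ ℓ)
    (H : Matrix (Fin (n₁ - 1) ⊕ Fin m) (Fin ℓ × (Fin (n₁ - 1) ⊕ Fin m)) F)
    (h₁ : ∀ (l : Fin ℓ) (i j : Fin (n₁ - 1)), H (Sum.inl i) (l, Sum.inl j) = 0)
    (h₂ : ∀ (l : Fin ℓ) (i j : Fin m), H (Sum.inr i) (l, Sum.inr j) = 0)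
    (hbig : ℓ * m < n₁ - 1) :
    H.rank ≤ (ℓ + 1) * m := by
  classical
  -- generating family: m standard basis vectors supported on `inr`,
  -- together with the ℓ·m columns of type `(l, inr j)`.
  set f : (Fin m ⊕ (Fin ℓ × Fin m)) → ((Fin (n₁ - 1) ⊕ Fin m) → F) :=
    fun x => match x with
      | Sum.inl i => Pi.single (Sum.inr i) 1
      | Sum.inr (l, j) => H.transpose (l, Sum.inr j)
    with hf
  have hsub : Set.range H.transpose ⊆ (Submodule.span F (Set.range f) : Set _) := by
    rintro v ⟨⟨l, c⟩, rfl⟩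
    rcases c with j | j
    · -- column (l, inl j): supported on `inr` rows
      have hv : H.transpose (l, Sum.inl j) =
          ∑ i : Fin m, (H (Sum.inr i) (l, Sum.inl j)) • f (Sum.inl i) := by
        funext r
        rcases r with i | i
        · simp [hf, Matrix.transpose_apply, h₁ l i j, Pi.single_apply]
        · simp [hf, Matrix.transpose_apply, Pi.single_apply]
      rw [hv]
      exact Submodule.sum_mem _ fun i _ =>
        Submodule.smul_mem _ _ (Submodule.subset_span ⟨Sum.inl i, rfl⟩)
    · exact Submodule.subset_span ⟨Sum.inr (l, j), rfl⟩
  have hspan : Submodule.span F (Set.range H.transpose) ≤ Submodule.span F (Set.range f) :=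
    Submodule.span_le.mpr hsub
  have hfd : FiniteDimensional F (Submodule.span F (Set.range f)) :=
    FiniteDimensional.span_of_finite F (Set.finite_range f)
  calc H.rank = Module.finrank F (Submodule.span F (Set.range H.transpose)) :=
        Matrix.rank_eq_finrank_span_cols H
    _ ≤ Module.finrank F (Submodule.span F (Set.range f)) :=
        Submodule.finrank_mono hspan
    _ ≤ Fintype.card (Fin m ⊕ (Fin ℓ × Fin m)) := finrank_range_le_card f
    _ = (ℓ + 1) * m := by simp [Fintype.card_sum, Fintype.card_prod]; ring
end

section
/- Young flattening is subadditive in rank: if a tensor A ∈ F^{n₁} ⊗ F^{n₂} ⊗ F^{n₃} is a sum of r rank-one tensors, then the linear map A_A : F^{n₁} ⊗ Λ^p F^{n₃} → F^{n₂} ⊗ Λ^{p+1} F^{n₃}, defined on rank-one tensors a₁⊗a₂⊗a₃ by (f ⊗ g) ↦ (a₁·f)·(a₂ ⊗ (g ∧ a₃)) and extended linearly in A, satisfies rank(A_A) ≤ r · C(n₃−1, p). -/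
open scoped TensorProduct

set_option synthInstance.maxHeartbeats 1000000
set_option maxHeartbeats 1000000
set_option maxSynthPendingDepth 3

/-- Wedging on the right with a fixed vector `w`, as a linear map
`⋀^p V →ₗ ⋀^(p+1) V`. -/
noncomputable def wedgeMap (F : Type*) [Field F] {V : Type*} [AddCommGroup V]
    [Module F V] (p : ℕ) (w : V) : ⋀[F]^p V →ₗ[F] ⋀[F]^(p+1) V :=
  (LinearMap.mulRight F (ExteriorAlgebra.ι F w)).restrict fun x hx => by
    have h : (⋀[F]^(p+1) V : Submodule F (ExteriorAlgebra F V)) =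
        ⋀[F]^p V * LinearMap.range (ExteriorAlgebra.ι F (M := V)) := pow_succ _ p
    rw [h]
    exact Submodule.mul_mem_mul hx (LinearMap.mem_range_self _ w)

lemma ιMulti_snoc {F : Type*} [Field F] {V : Type*} [AddCommGroup V] [Module F V]
    (p : ℕ) (w : Fin p → V) (x : V) :
    ExteriorAlgebra.ιMulti F (p+1) (Fin.snoc w x) =
      ExteriorAlgebra.ιMulti F p w * ExteriorAlgebra.ι F x := by
  rw [ExteriorAlgebra.ιMulti_apply, ExteriorAlgebra.ιMulti_apply, List.ofFn_succ',
    List.concat_eq_append, List.prod_append, List.prod_cons, List.prod_nil, mul_one]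
  simp [Fin.snoc_castSucc]

lemma ιMulti_mul_ι_eq_zero {F : Type*} [Field F] {V : Type*} [AddCommGroup V] [Module F V]
    (p : ℕ) (w : Fin p → V) (c : V) (k : Fin p) (hk : w k = c) :
    ExteriorAlgebra.ιMulti F p w * ExteriorAlgebra.ι F c = 0 := by
  rw [← ιMulti_snoc]
  exact AlternatingMap.map_eq_zero_of_eq _ _ (i := Fin.castSucc k) (j := Fin.last p)
    (by simp [hk]) (Fin.ne_of_lt (Fin.castSucc_lt_last k))

-- expansion of ιMulti in a basis
lemma ιMulti_expand {F : Type*} [Field F] (n p : ℕ) (bb : Module.Basis (Fin n) F (Fin n → F))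
    (v : Fin p → (Fin n → F)) :
    ExteriorAlgebra.ιMulti F p v =
      ∑ j : Fin p → Fin n, (∏ k, bb.repr (v k) (j k)) •
        ExteriorAlgebra.ιMulti F p (fun k => bb (j k)) := by
  classical
  have h1 : v = fun k => ∑ j : Fin n, bb.repr (v k) j • bb j := by
    funext k; rw [bb.sum_repr (v k)]
  calc ExteriorAlgebra.ιMulti F p v
      = (ExteriorAlgebra.ιMulti F p).toMultilinearMap
          (fun k => ∑ j : Fin n, bb.repr (v k) j • bb j) := by rw [← h1]; rfl
    _ = ∑ j : Fin p → Fin n, (ExteriorAlgebra.ιMulti F p).toMultilinearMap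
          (fun k => bb.repr (v k) (j k) • bb (j k)) :=
        MultilinearMap.map_sum _ _
    _ = _ := by
        refine Finset.sum_congr rfl fun j _ => ?_
        exact MultilinearMap.map_smul_univ _ _ _

lemma wedge_span {F : Type*} [Field F] (n₃ p : ℕ) (c : Fin n₃ → F) :
    ∃ (ι : Type) (_ : Fintype ι) (fam : ι → ⋀[F]^(p+1) (Fin n₃ → F)),
      Fintype.card ι ≤ (n₃ - 1).choose p ∧
      LinearMap.range (wedgeMap F p c) ≤ Submodule.span F (Set.range fam) := by
  classical
  by_cases hc : c = 0
  · refine ⟨PEmpty, inferInstance, PEmpty.elim, by simp, ?_⟩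
    rintro y ⟨x, rfl⟩
    have : wedgeMap F p c x = 0 := by
      apply Subtype.ext
      simp only [wedgeMap, LinearMap.restrict_coe_apply, LinearMap.mulRight_apply,
        ZeroMemClass.coe_zero, hc, map_zero, mul_zero]
    rw [this]; exact zero_mem _
  -- c ≠ 0 : build an adapted basis
  · have hli : LinearIndepOn F id ({c} : Set (Fin n₃ → F)) :=
      LinearIndepOn.singleton hc
    let b0 := Module.Basis.extend hli
    haveI : Fintype (hli.extend (Set.subset_univ _)) := FiniteDimensional.fintypeBasisIndex b0
    have hcard : Fintype.card (hli.extend (Set.subset_univ _)) = n₃ := by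
      rw [← Module.finrank_eq_card_basis b0, Module.finrank_fin_fun]
    let e := Fintype.equivFinOfCardEq hcard
    let bb := b0.reindex e
    have hcmem : c ∈ hli.extend (Set.subset_univ _) := hli.subset_extend _ rfl
    let i₀ : Fin n₃ := e ⟨c, hcmem⟩
    have hbi₀ : bb i₀ = c := by
      rw [Module.Basis.reindex_apply, Equiv.symm_apply_apply]
      exact Module.Basis.extend_apply_self hli _
    let J := {j : Fin n₃ // j ≠ i₀}
    let ι := {s : Finset J // s.card = p}
    refine ⟨ι, inferInstance, ?_, ?_, ?_⟩
    · -- the family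
      intro s
      refine ⟨ExteriorAlgebra.ιMulti F p (fun k => bb ((s.1.orderIsoOfFin s.2 k : J) : Fin n₃)) *
        ExteriorAlgebra.ι F c, ?_⟩
      have h : (⋀[F]^(p+1) (Fin n₃ → F) : Submodule F (ExteriorAlgebra F (Fin n₃ → F))) =
          ⋀[F]^p (Fin n₃ → F) * LinearMap.range (ExteriorAlgebra.ι F (M := Fin n₃ → F)) := pow_succ _ p
      rw [h]
      exact Submodule.mul_mem_mul (ExteriorAlgebra.ιMulti_range F p ⟨_, rfl⟩)
        (LinearMap.mem_range_self _ c)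
    · -- cardinality
      have : Fintype.card J = n₃ - 1 := by
        simp [J, Fintype.card_subtype_compl]
      rw [Fintype.card_finset_len, this]
    · -- range inclusion
      set fam : ι → ⋀[F]^(p+1) (Fin n₃ → F) := fun s =>
        ⟨ExteriorAlgebra.ιMulti F p (fun k => bb ((s.1.orderIsoOfFin s.2 k : J) : Fin n₃)) *
        ExteriorAlgebra.ι F c, by
          have h : (⋀[F]^(p+1) (Fin n₃ → F) : Submodule F (ExteriorAlgebra F (Fin n₃ → F))) =
              ⋀[F]^p (Fin n₃ → F) * LinearMap.range (ExteriorAlgebra.ι F (M := Fin n₃ → F)) := pow_succ _ p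
          rw [h]
          exact Submodule.mul_mem_mul (ExteriorAlgebra.ιMulti_range F p ⟨_, rfl⟩)
            (LinearMap.mem_range_self _ c)⟩ with hfam
      -- ambient span claim
      have amb : ∀ z ∈ (⋀[F]^p (Fin n₃ → F) : Submodule F (ExteriorAlgebra F (Fin n₃ → F))),
          z * ExteriorAlgebra.ι F c ∈
            Submodule.span F (Set.range (fun s : ι => (fam s : ExteriorAlgebra F (Fin n₃ → F)))) := by
        intro z hz
        rw [← ExteriorAlgebra.ιMulti_span_fixedDegree] at hz
        induction hz using Submodule.span_induction with
        | mem x hx =>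
            obtain ⟨v, rfl⟩ := hx
            rw [ιMulti_expand n₃ p bb v, Finset.sum_mul]
            refine Submodule.sum_mem _ fun j _ => ?_
            rw [smul_mul_assoc]
            refine Submodule.smul_mem _ _ ?_
            by_cases hj : ∃ k, j k = i₀
            · obtain ⟨k, hk⟩ := hj
              rw [ιMulti_mul_ι_eq_zero p _ c k (by rw [hk, hbi₀])]
              exact zero_mem _
            · push_neg at hj
              by_cases hinj : Function.Injective j
              · -- injective, avoiding i₀
                let j' : Fin p → J := fun k => ⟨j k, hj k⟩
                have hj' : Function.Injective j' := fun a b h =>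
                  hinj (congrArg Subtype.val h)
                let s : Finset J := Finset.univ.image j'
                have hs : s.card = p := by
                  rw [Finset.card_image_of_injective _ hj', Finset.card_univ, Fintype.card_fin]
                let e' := s.orderIsoOfFin hs
                have hmem : ∀ k, j' k ∈ s := fun k => Finset.mem_image_of_mem _ (Finset.mem_univ k)
                let f : Fin p → Fin p := fun k => e'.symm ⟨j' k, hmem k⟩
                have hfinj : Function.Injective f := by
                  intro a b h
                  apply hj'
                  have := congrArg e' h
                  rw [OrderIso.apply_symm_apply, OrderIso.apply_symm_apply] at this
                  exact congrArg Subtype.val this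
                let σ : Equiv.Perm (Fin p) :=
                  Equiv.ofBijective f (Finite.injective_iff_bijective.mp hfinj)
                set u : Fin p → (Fin n₃ → F) := fun k => bb ((e' k : J) : Fin n₃) with hu
                have hcomp : (fun k => bb (j k)) = u ∘ σ := by
                  funext k
                  show bb (j k) = bb ((e' (f k) : J) : Fin n₃)
                  simp only [f, OrderIso.apply_symm_apply]
                  rfl
                have hperm := AlternatingMap.map_perm (ExteriorAlgebra.ιMulti F p) u σ
                rw [hcomp, hperm, smul_mul_assoc]
                have : ExteriorAlgebra.ιMulti F p u * ExteriorAlgebra.ι F c =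
                    (fam ⟨s, hs⟩ : ExteriorAlgebra F (Fin n₃ → F)) := rfl
                rcases Int.units_eq_one_or (Equiv.Perm.sign σ) with h1 | h1 <;>
                  rw [h1, this]
                · rw [one_smul]
                  exact Submodule.subset_span ⟨⟨s, hs⟩, rfl⟩
                · rw [Units.neg_smul, one_smul]
                  exact Submodule.neg_mem _ (Submodule.subset_span ⟨⟨s, hs⟩, rfl⟩)
              · have hni : ¬ Function.Injective (fun k => bb (j k)) := by
                  intro h
                  exact hinj fun a b hab => h (congrArg bb hab)
                rw [AlternatingMap.map_eq_zero_of_not_injective _ _ hni, zero_mul]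
                exact zero_mem _
        | zero => rw [zero_mul]; exact zero_mem _
        | add x y _ _ hx hy => rw [add_mul]; exact Submodule.add_mem _ hx hy
        | smul t x _ hx => rw [smul_mul_assoc]; exact Submodule.smul_mem _ _ hx
      -- deduce inclusion inside the subtype
      rintro y ⟨x, rfl⟩
      have hval : ((wedgeMap F p c x : ⋀[F]^(p+1) (Fin n₃ → F)) : ExteriorAlgebra F (Fin n₃ → F)) =
          (x : ExteriorAlgebra F (Fin n₃ → F)) * ExteriorAlgebra.ι F c := by
        simp only [wedgeMap, LinearMap.restrict_coe_apply, LinearMap.mulRight_apply]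
      have h1 : ((wedgeMap F p c x : ⋀[F]^(p+1) (Fin n₃ → F)) : ExteriorAlgebra F (Fin n₃ → F)) ∈
          Submodule.span F (Set.range (fun s : ι => (fam s : ExteriorAlgebra F (Fin n₃ → F)))) := by
        rw [hval]; exact amb _ x.2
      have h2 : Set.range (fun s : ι => (fam s : ExteriorAlgebra F (Fin n₃ → F))) =
          (⋀[F]^(p+1) (Fin n₃ → F)).subtype '' Set.range fam := by
        rw [← Set.range_comp]; rfl
      rw [h2, ← Submodule.map_span] at h1
      obtain ⟨w, hw, hweq⟩ := h1
      have : w = wedgeMap F p c x := Subtype.ext hweq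
      rwa [← this]

lemma wedge_span' {F : Type*} [Field F] (n₃ p : ℕ) (c : Fin n₃ → F) :
    ∃ (m : ℕ) (fam : Fin m → ⋀[F]^(p+1) (Fin n₃ → F)),
      m ≤ (n₃ - 1).choose p ∧
      LinearMap.range (wedgeMap F p c) ≤ Submodule.span F (Set.range fam) := by
  obtain ⟨ι, ft, fam, hc, hle⟩ := wedge_span (F := F) n₃ p c
  letI := ft
  refine ⟨Fintype.card ι, fam ∘ (Fintype.equivFin ι).symm, hc, ?_⟩
  rwa [Set.range_comp, Equiv.range_eq_univ, Set.image_univ]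

/-- Subadditivity of the Young flattening: if `Φ` is the linear extension of
`a₁⊗a₂⊗a₃ ↦ (f ⊗ g ↦ (a₁·f)·(a₂ ⊗ (g ∧ a₃)))` and the tensor `A` is a sum of
`r` rank-one tensors, then `rank (Φ A) ≤ r · C(n₃-1, p)`. -/
theorem stmt7 {F : Type*} [Field F] (n₁ n₂ n₃ p r : ℕ) (hp : p ≤ n₃ - 1)
    (Φ : ((Fin n₁ → F) ⊗[F] ((Fin n₂ → F) ⊗[F] (Fin n₃ → F))) →ₗ[F]
      (((Fin n₁ → F) ⊗[F] ⋀[F]^p (Fin n₃ → F)) →ₗ[F]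
        ((Fin n₂ → F) ⊗[F] ⋀[F]^(p+1) (Fin n₃ → F))))
    (hΦ : ∀ (a₁ : Fin n₁ → F) (a₂ : Fin n₂ → F) (a₃ : Fin n₃ → F),
      Φ (a₁ ⊗ₜ[F] (a₂ ⊗ₜ[F] a₃)) =
        TensorProduct.map
          ((LinearMap.toSpanSingleton F (Fin n₂ → F) a₂).comp
            (∑ i, a₁ i • (LinearMap.proj i : (Fin n₁ → F) →ₗ[F] F)))
          (wedgeMap F p a₃))
    (A : (Fin n₁ → F) ⊗[F] ((Fin n₂ → F) ⊗[F] (Fin n₃ → F)))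
    (a : Fin r → Fin n₁ → F) (b : Fin r → Fin n₂ → F) (c : Fin r → Fin n₃ → F)
    (hA : A = ∑ i, a i ⊗ₜ[F] (b i ⊗ₜ[F] c i)) :
    Module.finrank F (LinearMap.range (Φ A)) ≤ r * (n₃ - 1).choose p := by
  classical
  -- choose spanning families for each wedge map
  have H := fun i : Fin r => wedge_span' (F := F) n₃ p (c i)
  choose m fam hcard hle using H
  -- the big family in the tensor product target
  let bigfam : ((i : Fin r) × Fin (m i)) → ((Fin n₂ → F) ⊗[F] ⋀[F]^(p+1) (Fin n₃ → F)) :=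
    fun x => b x.1 ⊗ₜ[F] fam x.1 x.2
  -- each summand's range lies in the span of bigfam
  have key : ∀ i : Fin r, LinearMap.range (Φ (a i ⊗ₜ[F] (b i ⊗ₜ[F] c i))) ≤
      Submodule.span F (Set.range bigfam) := by
    intro i
    rw [hΦ, TensorProduct.range_map_eq_span_tmul, Submodule.span_le]
    rintro t ⟨m, n, rfl⟩
    have hfm : (LinearMap.toSpanSingleton F (Fin n₂ → F) (b i)).comp
        (∑ k, a i k • (LinearMap.proj k : (Fin n₁ → F) →ₗ[F] F)) m =
        ((∑ k, a i k • (LinearMap.proj k : (Fin n₁ → F) →ₗ[F] F)) m) • b i := by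
      simp [LinearMap.toSpanSingleton_apply, Finset.sum_smul]
    rw [hfm, ← TensorProduct.smul_tmul']
    refine Submodule.smul_mem _ _ ?_
    have h1 : wedgeMap F p (c i) n ∈ Submodule.span F (Set.range (fam i)) :=
      hle i (LinearMap.mem_range_self _ n)
    have h2 := Submodule.apply_mem_span_image_of_mem_span
      (TensorProduct.mk F (Fin n₂ → F) (⋀[F]^(p+1) (Fin n₃ → F)) (b i)) h1
    refine Submodule.span_mono ?_ h2
    rintro t ⟨y, ⟨idx, rfl⟩, rfl⟩
    exact ⟨⟨i, idx⟩, rfl⟩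
  -- the range of Φ A lies in the span of bigfam
  have hrange : LinearMap.range (Φ A) ≤ Submodule.span F (Set.range bigfam) := by
    rintro y ⟨x, rfl⟩
    rw [hA, map_sum, LinearMap.sum_apply]
    exact Submodule.sum_mem _ fun i _ => key i (LinearMap.mem_range_self _ x)
  -- finrank bound
  haveI : FiniteDimensional F (Submodule.span F (Set.range bigfam)) :=
    FiniteDimensional.span_of_finite _ (Set.finite_range bigfam)
  calc Module.finrank F (LinearMap.range (Φ A))
      ≤ Module.finrank F (Submodule.span F (Set.range bigfam)) :=
        Submodule.finrank_mono hrange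
    _ ≤ (Set.range bigfam).toFinset.card := finrank_span_le_card _
    _ ≤ Fintype.card ((i : Fin r) × Fin (m i)) := by
        rw [Set.toFinset_range]
        exact (Finset.card_image_le).trans (by simp)
    _ = ∑ i, m i := by simp [Fintype.card_sigma]
    _ ≤ ∑ _i : Fin r, (n₃ - 1).choose p := Finset.sum_le_sum fun i _ => hcard i
    _ = r * (n₃ - 1).choose p := by simp [Finset.sum_const, mul_comm]
end

section
/- For the Young flattening with n₃ = 3 and p = 1: if A ∈ F^{n₂×n₁×3} has slices X₁, X₂, X₃ ∈ F^{n₂×n₁}, then the 3n₂ × 3n₁ block matrix M = [[0, X₃, −X₂], [−X₃, 0, X₁], [X₂, −X₁, 0]] satisfies rank(M) ≤ 2·rank(A), where rank(A) denotes the tensor rank of A. -/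
/-- The Strassen block matrix `[[0, X₃, −X₂], [−X₃, 0, X₁], [X₂, −X₁, 0]]`
built from the three slices `X₁ = X 0`, `X₂ = X 1`, `X₃ = X 2` of a tensor in
`F^{n₂×n₁×3}`. -/
def strassenMatrix {F : Type*} [Field F] {n₁ n₂ : ℕ}
    (X : Fin 3 → Matrix (Fin n₂) (Fin n₁) F) :
    Matrix (Fin 3 × Fin n₂) (Fin 3 × Fin n₁) F :=
  fun p q =>
    (![![0, X 2, -(X 1)], ![-(X 2), 0, X 0], ![X 1, -(X 0), 0]] p.1 q.1) p.2 q.2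

/-- The tensor rank of a tensor in `F^{n₂×n₁×3}` given by its slices: the
minimal `r` such that `X k = Σᵢ cᵢₖ • aᵢ bᵢᵀ`. -/
noncomputable def sliceRank {F : Type*} [Field F] {n₁ n₂ : ℕ}
    (X : Fin 3 → Matrix (Fin n₂) (Fin n₁) F) : ℕ :=
  sInf {r | ∃ (a : Fin r → Fin n₂ → F) (b : Fin r → Fin n₁ → F)
    (c : Fin r → Fin 3 → F),
    ∀ k, X k = ∑ i, c i k • Matrix.vecMulVec (a i) (b i)}

section aux

open Matrix

variable {F : Type*} [Field F] {n₁ n₂ : ℕ}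

lemma matrix_rank_add_le {m n : Type*} [Fintype n] (A B : Matrix m n F) :
    (A + B).rank ≤ A.rank + B.rank := by
  classical
  rw [Matrix.rank, Matrix.rank, Matrix.rank, Matrix.mulVecLin_add]
  refine le_trans (Submodule.finrank_mono ?_)
    (Submodule.finrank_add_le_finrank_add_finrank _ _)
  rintro x ⟨y, rfl⟩
  exact Submodule.add_mem_sup (LinearMap.mem_range_self _ y) (LinearMap.mem_range_self _ y)

lemma matrix_rank_sum_le {m n ι : Type*} [Fintype n] (s : Finset ι)
    (M : ι → Matrix m n F) :
    (∑ i ∈ s, M i).rank ≤ ∑ i ∈ s, (M i).rank := by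
  classical
  induction s using Finset.induction with
  | empty => simp
  | insert _ _ h ih =>
    rw [Finset.sum_insert h, Finset.sum_insert h]
    exact le_trans (matrix_rank_add_le _ _) (Nat.add_le_add_left ih _)

/-- The skew 3×3 matrix associated to `c`. -/
def skewT (c : Fin 3 → F) : Matrix (Fin 3) (Fin 3) F :=
  !![0, c 2, -(c 1); -(c 2), 0, c 0; c 1, -(c 0), 0]

lemma skewT_mulVec (c : Fin 3 → F) : (skewT c).mulVec c = 0 := by
  funext j
  rw [Matrix.mulVec, Pi.zero_apply]
  fin_cases j <;> simp [skewT, dotProduct, Fin.sum_univ_three] <;> ring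

lemma skewT_rank_le (c : Fin 3 → F) : (skewT c).rank ≤ 2 := by
  by_cases hc : c = 0
  · have h0 : skewT c = 0 := by
      subst hc
      funext i j
      show skewT 0 i j = 0
      fin_cases i <;> fin_cases j <;>
        simp [skewT, Matrix.vecHead, Matrix.vecTail]
    rw [h0, Matrix.rank_zero]
    omega
  · have hker : c ∈ LinearMap.ker (skewT c).mulVecLin := by
      simpa [Matrix.mulVecLin] using skewT_mulVec c
    have hnt : Nontrivial (LinearMap.ker (skewT c).mulVecLin) :=
      Submodule.nontrivial_iff_ne_bot.mpr (fun h => hc (by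
        have := h ▸ hker
        simpa using this))
    have hpos : 0 < Module.finrank F (LinearMap.ker (skewT c).mulVecLin) :=
      Module.finrank_pos
    have hrn := LinearMap.finrank_range_add_finrank_ker (skewT c).mulVecLin
    have h3 : Module.finrank F (Fin 3 → F) = 3 := by simp
    rw [h3] at hrn
    have : (skewT c).rank = Module.finrank F (LinearMap.range (skewT c).mulVecLin) := rfl
    omega

/-- Left factor. -/
def leftM (a : Fin n₂ → F) : Matrix (Fin 3 × Fin n₂) (Fin 3) F :=
  fun p k => if p.1 = k then a p.2 else 0

/-- Right factor. -/
def rightM (b : Fin n₁ → F) : Matrix (Fin 3) (Fin 3 × Fin n₁) F :=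
  fun k q => if k = q.1 then b q.2 else 0

lemma strassen_rank_one (a : Fin n₂ → F) (b : Fin n₁ → F) (c : Fin 3 → F) :
    strassenMatrix (fun k => c k • Matrix.vecMulVec a b)
      = leftM a * (skewT c * rightM b) := by
  funext p q
  obtain ⟨j, x⟩ := p
  obtain ⟨l, y⟩ := q
  show _ = (leftM a * (skewT c * rightM b)) (j, x) (l, y)
  fin_cases j <;> fin_cases l <;>
    simp [strassenMatrix, Matrix.mul_apply, leftM, rightM, skewT, Matrix.vecMul,
      dotProduct, Fin.sum_univ_three, Matrix.vecMulVec_apply] <;> try ring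

lemma strassen_rank_one_rank_le (a : Fin n₂ → F) (b : Fin n₁ → F) (c : Fin 3 → F) :
    (strassenMatrix (fun k => c k • Matrix.vecMulVec a b)).rank ≤ 2 := by
  rw [strassen_rank_one]
  exact le_trans (Matrix.rank_mul_le_right _ _)
    (le_trans (Matrix.rank_mul_le_left _ _) (skewT_rank_le c))

lemma sliceRank_set_nonempty (X : Fin 3 → Matrix (Fin n₂) (Fin n₁) F) :
    {r | ∃ (a : Fin r → Fin n₂ → F) (b : Fin r → Fin n₁ → F)
      (c : Fin r → Fin 3 → F),
      ∀ k, X k = ∑ i, c i k • Matrix.vecMulVec (a i) (b i)} ≠ ∅ := by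
  classical
  refine Set.nonempty_iff_ne_empty.mp ⟨n₂ * n₁, ?_⟩
  refine ⟨fun i => Pi.single (finProdFinEquiv.symm i).1 1,
    fun i => Pi.single (finProdFinEquiv.symm i).2 1,
    fun i k => X k (finProdFinEquiv.symm i).1 (finProdFinEquiv.symm i).2, ?_⟩
  intro k
  ext x y
  rw [Matrix.sum_apply]
  simp only [Pi.smul_apply, Matrix.smul_apply, smul_eq_mul, Matrix.vecMulVec_apply]
  have hEq : (∑ p : Fin n₂ × Fin n₁,
        X k p.1 p.2 * ((Pi.single p.1 (1:F) : Fin n₂ → F) x *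
          (Pi.single p.2 (1:F) : Fin n₁ → F) y))
      = ∑ i : Fin (n₂ * n₁),
        X k (finProdFinEquiv.symm i).1 (finProdFinEquiv.symm i).2 *
          ((Pi.single (finProdFinEquiv.symm i).1 (1:F) : Fin n₂ → F) x *
            (Pi.single (finProdFinEquiv.symm i).2 (1:F) : Fin n₁ → F) y) :=
    Fintype.sum_equiv finProdFinEquiv _ _ (fun p => by rw [Equiv.symm_apply_apply])
  rw [← hEq]
  rw [Finset.sum_eq_single (x, y)]
  · simp
  · intro p _ hp
    have h : p.1 ≠ x ∨ p.2 ≠ y := by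
      by_contra h
      push_neg at h
      exact hp (Prod.ext h.1 h.2)
    rcases h with h | h <;> simp [Pi.single_apply, h.symm]
  · intro h
    exact absurd (Finset.mem_univ _) h

end aux

/-- Strassen's equations: the rank of the skew block matrix built from the
slices of a tensor `A ∈ F^{n₂×n₁×3}` is at most twice the tensor rank of `A`. -/
theorem stmt9 {F : Type*} [Field F] (n₁ n₂ : ℕ)
    (X : Fin 3 → Matrix (Fin n₂) (Fin n₁) F) :
    (strassenMatrix X).rank ≤ 2 * sliceRank X := by
  classical
  obtain ⟨a, b, c, hX⟩ :
      ∃ (a : Fin (sliceRank X) → Fin n₂ → F) (b : Fin (sliceRank X) → Fin n₁ → F)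
        (c : Fin (sliceRank X) → Fin 3 → F),
        ∀ k, X k = ∑ i, c i k • Matrix.vecMulVec (a i) (b i) :=
    Nat.sInf_mem (Set.nonempty_iff_ne_empty.mpr (sliceRank_set_nonempty X))
  have hsum : strassenMatrix X
      = ∑ i : Fin (sliceRank X),
          strassenMatrix (fun k => c i k • Matrix.vecMulVec (a i) (b i)) := by
    ext p q
    obtain ⟨j, x⟩ := p
    obtain ⟨l, y⟩ := q
    rw [Matrix.sum_apply]
    fin_cases j <;> fin_cases l <;>
      simp [strassenMatrix, hX, Finset.sum_apply, Matrix.sum_apply, Matrix.smul_apply,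
        smul_eq_mul, Finset.sum_neg_distrib]
  calc (strassenMatrix X).rank
      ≤ ∑ i : Fin (sliceRank X), (strassenMatrix
          (fun k => c i k • Matrix.vecMulVec (a i) (b i))).rank := by
        rw [hsum]; exact matrix_rank_sum_le _ _
    _ ≤ ∑ _i : Fin (sliceRank X), 2 :=
        Finset.sum_le_sum fun i _ => strassen_rank_one_rank_le _ _ _
    _ = 2 * sliceRank X := by simp [mul_comm]
end
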